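/- Fix an integer m ≥ 2. For n ∈ ℕ and x ∈ {0,1}^n, let z(x) be the number of coordinates of x equal to 0, let MOD*_m(x) = 1 if m divides z(x) and 0 otherwise, let x^i denote x with its i-th coordinate flipped, let σ_x = #{ i : 1 ≤ i ≤ n, MOD*_m(x^i) ≠ MOD*_m(x) }, and let α_n = 2^{−n} · Σ_{x ∈ {0,1}^n} σ_x be the average sensitivity. Then α_n − 2n/m tends to 0 as n → ∞. -/

import Mathlib

/-- The number of coordinates of `x` equal to `0` (i.e. `false`). -/
def zeros {n : ℕ} (x : Fin n → Bool) : ℕ :=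
  (Finset.univ.filter fun i => x i = false).card

/-- The Boolean function `MOD*_m`: outputs `1` (`true`) iff the number of
`0`-coordinates of the input is a multiple of `m`. -/
def modStar (m : ℕ) {n : ℕ} (x : Fin n → Bool) : Bool :=
  decide (m ∣ zeros x)

/-- The sensitivity of `MOD*_m` at `x`: the number of coordinate flips that
change the output. -/
def sens (m : ℕ) {n : ℕ} (x : Fin n → Bool) : ℕ :=
  (Finset.univ.filter fun i =>
    modStar m (Function.update x i (!x i)) ≠ modStar m x).card

/-- weight function -/
def w (m n k : ℕ) : ℕ :=
  (if m ∣ k ∨ k % m = 1 then k else 0) + (if m ∣ k ∨ m ∣ (k+1) then n - k else 0)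

lemma mod_succ_one {m : ℕ} (hm : 2 ≤ m) (j : ℕ) : (j+1) % m = 1 ↔ j % m = 0 := by
  have h1 : (j + 1) % m = (j % m + 1) % m := by
    conv_lhs => rw [Nat.add_mod]
    rw [Nat.mod_eq_of_lt (show 1 < m by omega)]
  have h2 : j % m < m := Nat.mod_lt _ (by omega)
  rcases Nat.lt_or_ge (j % m + 1) m with h | h
  · rw [h1, Nat.mod_eq_of_lt h]; omega
  · have : j % m + 1 = m := by omega
    rw [h1, this, Nat.mod_self]; omega

lemma not_iff_or {A B : Prop} (h : ¬(A ∧ B)) : (¬(A ↔ B)) ↔ A ∨ B := by tauto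

lemma zeros_update_true {n : ℕ} {x : Fin n → Bool} {i : Fin n} (h : x i = false) :
    zeros (Function.update x i true) = zeros x - 1 ∧ 1 ≤ zeros x := by
  have hmem : i ∈ Finset.univ.filter fun j => x j = false := by simp [h]
  constructor
  · unfold zeros
    have : (Finset.univ.filter fun j => Function.update x i true j = false)
        = (Finset.univ.filter fun j => x j = false).erase i := by
      ext j
      rcases eq_or_ne j i with rfl | hj
      · simp [Function.update_apply]
      · simp [Function.update_apply, hj]
    rw [this, Finset.card_erase_of_mem hmem]
  · exact Finset.card_pos.mpr ⟨i, hmem⟩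

lemma zeros_update_false {n : ℕ} {x : Fin n → Bool} {i : Fin n} (h : x i = true) :
    zeros (Function.update x i false) = zeros x + 1 := by
  have hmem : i ∉ Finset.univ.filter fun j => x j = false := by simp [h]
  unfold zeros
  have : (Finset.univ.filter fun j => Function.update x i false j = false)
      = insert i (Finset.univ.filter fun j => x j = false) := by
    ext j
    rcases eq_or_ne j i with rfl | hj
    · simp [Function.update_apply]
    · simp [Function.update_apply, hj]
  rw [this, Finset.card_insert_of_notMem hmem]

lemma sens_eq {m : ℕ} (hm : 2 ≤ m) {n : ℕ} (x : Fin n → Bool) :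
    sens m x = w m n (zeros x) := by
  classical
  have hm1 : m ≠ 1 := by omega
  set z := zeros x with hz
  set P : Fin n → Prop := fun i =>
    modStar m (Function.update x i (!x i)) ≠ modStar m x with hP
  have key1 : ∀ i, x i = false → (P i ↔ (m ∣ z ∨ z % m = 1)) := by
    intro i hi
    have hz1 := (zeros_update_true hi).2
    have hzu : zeros (Function.update x i (!x i)) = z - 1 := by
      rw [hi]; exact (zeros_update_true hi).1
    have hA : m ∣ (z - 1) ↔ z % m = 1 := by
      rw [Nat.dvd_iff_mod_eq_zero, ← mod_succ_one (m := m) hm (z-1)]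
      congr! 2; omega
    have hexcl : ¬(m ∣ (z-1) ∧ m ∣ z) := by
      rintro ⟨h1, h2⟩
      have : m ∣ (z - (z-1)) := Nat.dvd_sub h2 h1
      have : m ∣ 1 := by simpa [Nat.sub_sub_self, show z - (z-1) = 1 by omega] using this
      omega
    simp only [hP, modStar, hzu, ne_eq, decide_eq_decide]
    rw [not_iff_or hexcl, hA]
    tauto
  have key2 : ∀ i, x i = true → (P i ↔ (m ∣ z ∨ m ∣ (z+1))) := by
    intro i hi
    have hzu : zeros (Function.update x i (!x i)) = z + 1 := by
      rw [hi]; exact zeros_update_false hi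
    have hexcl : ¬(m ∣ (z+1) ∧ m ∣ z) := by
      rintro ⟨h1, h2⟩
      have : m ∣ (z + 1 - z) := Nat.dvd_sub h1 h2
      simp at this; omega
    simp only [hP, modStar, hzu, ne_eq, decide_eq_decide]
    rw [not_iff_or hexcl]
    tauto
  have hcard : sens m x = ∑ i : Fin n, if P i then 1 else 0 := by
    rw [sens, Finset.card_filter]
  rw [hcard, ← Finset.sum_filter_add_sum_filter_not Finset.univ (fun i => x i = false)]
  have e1 : ∑ i ∈ Finset.univ.filter (fun i => x i = false), (if P i then 1 else 0)
      = if m ∣ z ∨ z % m = 1 then z else 0 := by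
    have step : ∑ i ∈ Finset.univ.filter (fun i => x i = false), (if P i then 1 else 0)
        = ∑ _i ∈ Finset.univ.filter (fun i => x i = false),
            (if m ∣ z ∨ z % m = 1 then 1 else 0) :=
      Finset.sum_congr rfl (fun i hi => by
        rw [Finset.mem_filter] at hi
        exact if_congr (key1 i hi.2) rfl rfl)
    rw [step, Finset.sum_const]
    split <;> simp [hz, zeros]
  have e2 : ∑ i ∈ Finset.univ.filter (fun i => ¬ x i = false), (if P i then 1 else 0)
      = if m ∣ z ∨ m ∣ (z+1) then n - z else 0 := by
    have step : ∑ i ∈ Finset.univ.filter (fun i => ¬ x i = false), (if P i then 1 else 0)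
        = ∑ _i ∈ Finset.univ.filter (fun i => ¬ x i = false),
            (if m ∣ z ∨ m ∣ (z+1) then 1 else 0) :=
      Finset.sum_congr rfl (fun i hi => by
        rw [Finset.mem_filter] at hi
        have : x i = true := by simpa using hi.2
        exact if_congr (key2 i this) rfl rfl)
    rw [step, Finset.sum_const]
    have hcardc : (Finset.univ.filter fun i => ¬ x i = false).card = n - z := by
      have := Finset.card_filter_add_card_filter_not
        (s := (Finset.univ : Finset (Fin n))) (p := fun i => x i = false)
      simp only [Finset.card_univ, Fintype.card_fin] at this
      have hzz : (Finset.univ.filter fun i => x i = false).card = z := rfl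
      omega
    rw [hcardc]
    split <;> simp
  rw [e1, e2, w]


lemma card_zeros_eq (n k : ℕ) :
    (Finset.univ.filter fun x : Fin n → Bool => zeros x = k).card = n.choose k := by
  classical
  rw [show n.choose k = (Finset.powersetCard k (Finset.univ : Finset (Fin n))).card by
    rw [Finset.card_powersetCard, Finset.card_univ, Fintype.card_fin]]
  apply Finset.card_bij'
      (i := fun x _ => Finset.univ.filter fun i => x i = false)
      (j := fun s _ => fun i => !(decide (i ∈ s)))
  · intro x hx
    funext i
    by_cases h : x i = false <;> simp [h]
  · intro s hs
    ext i
    simp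
  · intro x hx
    rw [Finset.mem_filter] at hx
    rw [Finset.mem_powersetCard]
    exact ⟨Finset.subset_univ _, hx.2⟩
  · intro s hs
    rw [Finset.mem_powersetCard] at hs
    rw [Finset.mem_filter]
    refine ⟨Finset.mem_univ _, ?_⟩
    rw [← hs.2]
    unfold zeros
    congr 1
    ext i
    simp

lemma sum_zeros_eq (n : ℕ) (F : ℕ → ℕ) :
    ∑ x : Fin n → Bool, F (zeros x) = ∑ k ∈ Finset.range (n+1), n.choose k * F k := by
  classical
  have hmaps : ∀ x : Fin n → Bool, x ∈ (Finset.univ : Finset (Fin n → Bool)) →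
      zeros x ∈ Finset.range (n+1) := by
    intro x _
    rw [Finset.mem_range]
    have : zeros x ≤ (Finset.univ : Finset (Fin n)).card := Finset.card_filter_le _ _
    simpa [Finset.card_univ] using Nat.lt_succ_of_le this
  rw [← Finset.sum_fiberwise_of_maps_to hmaps (fun x => F (zeros x))]
  refine Finset.sum_congr rfl fun k _ => ?_
  have step : ∑ x ∈ Finset.univ.filter (fun x : Fin n → Bool => zeros x = k), F (zeros x)
      = ∑ _x ∈ Finset.univ.filter (fun x : Fin n → Bool => zeros x = k), F k :=
    Finset.sum_congr rfl (fun x hx => by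
      rw [Finset.mem_filter] at hx
      rw [hx.2])
  rw [step, Finset.sum_const, card_zeros_eq, smul_eq_mul]

/-- counting binomials in an arithmetic progression -/
def Aseq (m s n : ℕ) : ℕ :=
  ∑ k ∈ Finset.range (n+1), if m ∣ (k + s) then n.choose k else 0

lemma choose_mul_succ (ν k : ℕ) : (ν+1).choose (k+1) * (k+1) = (ν+1) * ν.choose k :=
  (Nat.add_one_mul_choose_eq ν k).symm

lemma choose_mul_sub (ν k : ℕ) : (ν+1).choose k * ((ν+1) - k) = (ν+1) * ν.choose k := by
  rw [← Nat.choose_succ_right_eq]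
  exact (Nat.add_one_mul_choose_eq ν k).symm

lemma sum_sens_eq (m : ℕ) (hm : 2 ≤ m) (ν : ℕ) :
    ∑ x : Fin (ν+1) → Bool, sens m x
      = (ν+1) * (Aseq m 0 (ν+1) + Aseq m 0 ν + Aseq m 1 ν) := by
  classical
  rw [Finset.sum_congr rfl (fun x _ => sens_eq hm x), sum_zeros_eq]
  have split : ∀ k ∈ Finset.range (ν+1+1), (ν+1).choose k * w m (ν+1) k
      = ((if m ∣ (k+0) then (ν+1).choose k * (ν+1) else 0)
        + (if k % m = 1 then (ν+1).choose k * k else 0))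
        + (if m ∣ (k+1) then (ν+1).choose k * ((ν+1) - k) else 0) := by
    intro k hk
    rw [Finset.mem_range] at hk
    have hkn : k ≤ ν + 1 := by omega
    have hex1 : ¬(m ∣ k ∧ k % m = 1) := by
      rintro ⟨h1, h2⟩
      rw [Nat.dvd_iff_mod_eq_zero] at h1; omega
    have hex2 : ¬(m ∣ k ∧ m ∣ (k+1)) := by
      rintro ⟨h1, h2⟩
      have : m ∣ (k + 1 - k) := Nat.dvd_sub h2 h1
      simp at this; omega
    have hk' : k + (ν+1-k) = ν+1 := by omega
    by_cases h1 : m ∣ k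
    · have h2 : ¬ k % m = 1 := fun h => hex1 ⟨h1, h⟩
      have h3 : ¬ m ∣ (k+1) := fun h => hex2 ⟨h1, h⟩
      simp [w, h1, h2, h3, hk']
    · by_cases h2 : k % m = 1 <;> by_cases h3 : m ∣ (k+1) <;>
        simp [w, h1, h2, h3, Nat.mul_add]
  rw [Finset.sum_congr rfl split]
  rw [Finset.sum_add_distrib, Finset.sum_add_distrib]
  have e1 : ∑ k ∈ Finset.range (ν+1+1), (if m ∣ (k+0) then (ν+1).choose k * (ν+1) else 0)
      = (ν+1) * Aseq m 0 (ν+1) := by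
    rw [Aseq, Finset.mul_sum]
    refine Finset.sum_congr rfl fun k _ => ?_
    rw [mul_ite, mul_zero]
    split <;> ring
  have e2 : ∑ k ∈ Finset.range (ν+1+1), (if k % m = 1 then (ν+1).choose k * k else 0)
      = (ν+1) * Aseq m 0 ν := by
    rw [Finset.sum_range_succ']
    have h0 : (if 0 % m = 1 then (ν+1).choose 0 * 0 else 0) = 0 := by
      simp
    rw [h0, add_zero, Aseq, Finset.mul_sum]
    refine Finset.sum_congr rfl fun j _ => ?_
    have hcond : ((j+1) % m = 1) ↔ m ∣ (j+0) := by
      rw [Nat.add_zero, Nat.dvd_iff_mod_eq_zero]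
      exact mod_succ_one hm j
    rw [mul_ite, mul_zero]
    exact if_congr hcond (choose_mul_succ ν j) rfl
  have e3 : ∑ k ∈ Finset.range (ν+1+1), (if m ∣ (k+1) then (ν+1).choose k * ((ν+1) - k) else 0)
      = (ν+1) * Aseq m 1 ν := by
    rw [Finset.sum_range_succ]
    have hlast : (if m ∣ (ν+1+1) then (ν+1).choose (ν+1) * ((ν+1) - (ν+1)) else 0) = 0 := by
      simp
    rw [hlast, add_zero, Aseq, Finset.mul_sum]
    refine Finset.sum_congr rfl fun k _ => ?_
    rw [mul_ite, mul_zero]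
    exact if_congr Iff.rfl (choose_mul_sub ν k) rfl
  rw [e1, e2, e3]
  ring

lemma geom_root (m : ℕ) (ζ : ℂ) (hζ : IsPrimitiveRoot ζ m) (t : ℕ) :
    ∑ j ∈ Finset.range m, (ζ^t)^j = if m ∣ t then (m:ℂ) else 0 := by
  by_cases h : m ∣ t
  · rw [if_pos h]
    have hone : ζ^t = 1 := by
      obtain ⟨c, rfl⟩ := h
      rw [pow_mul, hζ.pow_eq_one, one_pow]
    simp [hone]
  · rw [if_neg h]
    have hne : ζ^t ≠ 1 := fun he => h ((hζ.pow_eq_one_iff_dvd t).mp he)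
    rw [geom_sum_eq hne]
    have hzm : (ζ^t)^m = 1 := by
      rw [← pow_mul, mul_comm, pow_mul, hζ.pow_eq_one, one_pow]
    rw [hzm]
    simp

lemma binom_root (m s n : ℕ) (ζ : ℂ) (hζ : IsPrimitiveRoot ζ m) :
    (m : ℂ) * (Aseq m s n : ℂ) = ∑ j ∈ Finset.range m, ζ^(s*j) * (1 + ζ^j)^n := by
  have hbin : ∀ j : ℕ, (1 + ζ^j)^n = ∑ k ∈ Finset.range (n+1), (ζ^j)^k * (n.choose k : ℂ) := by
    intro j
    rw [add_comm, add_pow]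
    refine Finset.sum_congr rfl fun k _ => ?_
    rw [one_pow, mul_one]
  have hrhs : ∑ j ∈ Finset.range m, ζ^(s*j) * (1 + ζ^j)^n
      = ∑ j ∈ Finset.range m, ∑ k ∈ Finset.range (n+1),
          ζ^(s*j) * ((ζ^j)^k * (n.choose k : ℂ)) :=
    Finset.sum_congr rfl fun j _ => by rw [hbin j, Finset.mul_sum]
  rw [hrhs, Finset.sum_comm]
  have inner : ∀ k, ∑ j ∈ Finset.range m, ζ^(s*j) * ((ζ^j)^k * (n.choose k : ℂ))
      = (n.choose k : ℂ) * (if m ∣ (k+s) then (m:ℂ) else 0) := by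
    intro k
    rw [← geom_root m ζ hζ (k+s), Finset.mul_sum]
    refine Finset.sum_congr rfl fun j _ => ?_
    rw [← pow_mul, ← pow_mul, show (k+s)*j = s*j + j*k from by ring, pow_add]
    ring
  rw [Finset.sum_congr rfl fun k _ => inner k]
  rw [show ((Aseq m s n : ℕ) : ℂ) = ∑ k ∈ Finset.range (n+1),
      (if m ∣ (k+s) then (n.choose k : ℂ) else 0) from by push_cast [Aseq, apply_ite]; rfl]
  rw [Finset.mul_sum]
  refine Finset.sum_congr rfl fun k _ => ?_
  rw [mul_ite, mul_ite, mul_zero, mul_zero]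
  split <;> ring

lemma aseq_est (m s n : ℕ) (hm : 2 ≤ m) (ζ : ℂ) (hζ : IsPrimitiveRoot ζ m)
    (c : ℝ) (hc0 : 0 ≤ c) (hc : ∀ j ∈ Finset.Ico 1 m, ‖1 + ζ^j‖ ≤ c) :
    |(Aseq m s n : ℝ) - 2^n / m| ≤ c^n := by
  have hm0 : (0:ℝ) < m := by positivity
  have hζ1 : ‖ζ‖ = 1 := Complex.norm_eq_one_of_pow_eq_one hζ.pow_eq_one (by omega)
  have key : ‖(m:ℂ) * (Aseq m s n : ℂ) - 2^n‖ ≤ (m-1 : ℕ) * c^n := by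
    rw [binom_root m s n ζ hζ]
    rw [Finset.range_eq_Ico, Finset.sum_eq_sum_Ico_succ_bot (by omega : 0 < m)]
    have h0 : ζ^(s*0) * (1 + ζ^0)^n = 2^n := by norm_num
    rw [h0, add_comm, add_sub_cancel_right]
    calc ‖∑ j ∈ Finset.Ico 1 m, ζ^(s*j) * (1 + ζ^j)^n‖
        ≤ ∑ j ∈ Finset.Ico 1 m, ‖ζ^(s*j) * (1 + ζ^j)^n‖ := norm_sum_le _ _
      _ ≤ ∑ _j ∈ Finset.Ico 1 m, c^n := by
          refine Finset.sum_le_sum fun j hj => ?_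
          rw [norm_mul, norm_pow, norm_pow, hζ1, one_pow, one_mul]
          exact pow_le_pow_left₀ (norm_nonneg _) (hc j hj) n
      _ = (m-1 : ℕ) * c^n := by
          rw [Finset.sum_const, Nat.card_Ico, nsmul_eq_mul]
  have h2 : |(Aseq m s n : ℝ) - 2^n/m| = ‖(m:ℂ) * (Aseq m s n : ℂ) - 2^n‖ / m := by
    rw [show (m:ℂ) * (Aseq m s n : ℂ) - 2^n
        = (((m:ℝ) * (Aseq m s n : ℝ) - 2^n : ℝ) : ℂ) from by push_cast; ring]
    rw [Complex.norm_real, Real.norm_eq_abs, eq_div_iff (ne_of_gt hm0),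
      ← abs_of_pos hm0, ← abs_mul]
    congr 1
    field_simp
    simp only [abs_of_pos hm0]
    ring
  rw [h2, div_le_iff₀ hm0]
  have hcn : 0 ≤ c^n := pow_nonneg hc0 n
  have hmn : ((m-1 : ℕ) : ℝ) ≤ (m : ℝ) := by
    have : (m-1 : ℕ) ≤ m := Nat.sub_le _ _
    exact_mod_cast this
  nlinarith [key]

lemma norm_one_add_lt_two {z : ℂ} (hz : ‖z‖ = 1) (hne : z ≠ 1) : ‖1 + z‖ < 2 := by
  have hsq : z.re * z.re + z.im * z.im = 1 := by
    have h := Complex.sq_norm z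
    rw [hz, Complex.normSq_apply] at h
    nlinarith
  have hre : z.re < 1 := by
    have h1 : z.re ≤ 1 := by
      have := Complex.re_le_norm z
      rwa [hz] at this
    rcases h1.lt_or_eq with h | h
    · exact h
    · exfalso
      apply hne
      have him : z.im = 0 := by nlinarith
      apply Complex.ext
      · simpa using h
      · simpa using him
  have h4 : ‖1 + z‖^2 < 2^2 := by
    rw [Complex.sq_norm, Complex.normSq_apply]
    simp only [Complex.add_re, Complex.add_im, Complex.one_re, Complex.one_im]
    nlinarith
  exact lt_of_pow_lt_pow_left₀ 2 (by norm_num) h4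


/-- Theorem 7 of the paper: the Boolean function `MOD*_m` has average
sensitivity `2n/m + o(1)`. -/
theorem average_sensitivity_modStar (m : ℕ) (hm : 2 ≤ m) :
    Filter.Tendsto
      (fun n : ℕ =>
        (∑ x : Fin n → Bool, (sens m x : ℝ)) / 2 ^ n - 2 * n / m)
      Filter.atTop (nhds 0) := by
  have hm0 : m ≠ 0 := by omega
  have hmR : (0:ℝ) < m := by positivity
  set ζ : ℂ := Complex.exp (2 * Real.pi * Complex.I / m) with hζdef
  have hζ : IsPrimitiveRoot ζ m := Complex.isPrimitiveRoot_exp m hm0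
  have hone : (1:ℕ) ∈ Finset.Ico 1 m := by
    rw [Finset.mem_Ico]; omega
  have hne : (Finset.Ico 1 m).Nonempty := ⟨1, hone⟩
  set c : ℝ := (Finset.Ico 1 m).sup' hne (fun j => ‖1 + ζ^j‖) with hcdef
  have hcmem : ∀ j ∈ Finset.Ico 1 m, ‖1 + ζ^j‖ ≤ c :=
    fun j hj => Finset.le_sup' (fun j => ‖1 + ζ^j‖) hj
  have hc0 : 0 ≤ c := le_trans (norm_nonneg _) (hcmem 1 hone)
  have hζ1 : ‖ζ‖ = 1 := Complex.norm_eq_one_of_pow_eq_one hζ.pow_eq_one hm0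
  have hc2 : c < 2 := by
    rw [hcdef, Finset.sup'_lt_iff]
    intro j hj
    rw [Finset.mem_Ico] at hj
    apply norm_one_add_lt_two
    · rw [norm_pow, hζ1, one_pow]
    · intro he
      have h1 := (hζ.pow_eq_one_iff_dvd j).mp he
      have h2 := Nat.le_of_dvd (by omega) h1
      omega
  set b : ℝ := c / 2 with hbdef
  have hb0 : 0 ≤ b := by positivity
  have hb1 : b < 1 := by rw [hbdef]; linarith
  -- the dominating sequence
  set g : ℕ → ℝ := fun n => 2 * (((n - 1 : ℕ) : ℝ) + 1) * b ^ (n - 1 : ℕ) with hgdef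
  have hgto : Filter.Tendsto g Filter.atTop (nhds 0) := by
    have hb' : ‖b‖ < 1 := by rw [Real.norm_eq_abs, abs_of_nonneg hb0]; exact hb1
    have h1 : Filter.Tendsto (fun ν : ℕ => (ν:ℝ)^1 * b^ν) Filter.atTop (nhds 0) :=
      (summable_pow_mul_geometric_of_norm_lt_one 1 hb').tendsto_atTop_zero
    have h2 : Filter.Tendsto (fun ν : ℕ => b^ν) Filter.atTop (nhds 0) :=
      tendsto_pow_atTop_nhds_zero_of_lt_one hb0 hb1
    have h3 : Filter.Tendsto (fun ν : ℕ => 2 * (((ν:ℝ)) + 1) * b^ν)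
        Filter.atTop (nhds 0) := by
      have := ((h1.const_mul 2).add (h2.const_mul 2))
      rw [show (2:ℝ) * 0 + 2 * 0 = 0 from by ring] at this
      refine this.congr fun ν => ?_
      ring
    exact h3.comp (Filter.tendsto_sub_atTop_nat 1)
  refine squeeze_zero_norm' ?_ hgto
  filter_upwards [Filter.eventually_ge_atTop 1] with n hn
  obtain ⟨ν, rfl⟩ : ∃ ν, n = ν + 1 := ⟨n - 1, by omega⟩
  have hg : g (ν+1) = 2 * ((ν:ℝ) + 1) * b ^ ν := by
    rw [hgdef]; simp
  rw [hg, Real.norm_eq_abs]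
  -- cast the sum identity
  have hsum : (∑ x : Fin (ν+1) → Bool, (sens m x : ℝ))
      = ((ν:ℝ)+1) * ((Aseq m 0 (ν+1) : ℝ) + (Aseq m 0 ν : ℝ) + (Aseq m 1 ν : ℝ)) := by
    have := sum_sens_eq m hm ν
    have := congrArg (fun t : ℕ => (t : ℝ)) this
    push_cast at this
    convert this using 2
  set D1 : ℝ := (Aseq m 0 (ν+1) : ℝ) - 2^(ν+1)/m with hD1
  set D2 : ℝ := (Aseq m 0 ν : ℝ) - 2^ν/m with hD2
  set D3 : ℝ := (Aseq m 1 ν : ℝ) - 2^ν/m with hD3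
  have hD1b : |D1| ≤ c^(ν+1) := aseq_est m 0 (ν+1) hm ζ hζ c hc0 hcmem
  have hD2b : |D2| ≤ c^ν := aseq_est m 0 ν hm ζ hζ c hc0 hcmem
  have hD3b : |D3| ≤ c^ν := aseq_est m 1 ν hm ζ hζ c hc0 hcmem
  have hfeq : (∑ x : Fin (ν+1) → Bool, (sens m x : ℝ)) / 2 ^ (ν+1) - 2 * (ν+1) / m
      = ((ν:ℝ)+1) * (D1 + D2 + D3) / 2^(ν+1) := by
    rw [hsum, hD1, hD2, hD3]
    have h2pos : (0:ℝ) < 2^(ν+1) := by positivity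
    field_simp
    ring
  push_cast
  rw [hfeq]
  have hnum : |((ν:ℝ)+1) * (D1 + D2 + D3)| ≤ ((ν:ℝ)+1) * (c^(ν+1) + c^ν + c^ν) := by
    rw [abs_mul, abs_of_nonneg (by positivity : (0:ℝ) ≤ (ν:ℝ)+1)]
    have htri : |D1 + D2 + D3| ≤ |D1| + |D2| + |D3| := abs_add_three _ _ _
    have : |D1| + |D2| + |D3| ≤ c^(ν+1) + c^ν + c^ν := by linarith
    have hle : |D1 + D2 + D3| ≤ c^(ν+1) + c^ν + c^ν := le_trans htri this
    exact mul_le_mul_of_nonneg_left hle (by positivity)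
  have h2pos : (0:ℝ) < 2^(ν+1) := by positivity
  calc |((ν:ℝ)+1) * (D1 + D2 + D3) / 2^(ν+1)|
      = |((ν:ℝ)+1) * (D1 + D2 + D3)| / 2^(ν+1) := by
        rw [abs_div, abs_of_pos h2pos]
    _ ≤ ((ν:ℝ)+1) * (c^(ν+1) + c^ν + c^ν) / 2^(ν+1) := by
        exact div_le_div_of_nonneg_right hnum h2pos.le
    _ ≤ ((ν:ℝ)+1) * (4 * c^ν) / 2^(ν+1) := by
        have hcc : c^(ν+1) ≤ 2 * c^ν := by
          rw [pow_succ, mul_comm]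
          exact mul_le_mul_of_nonneg_right (le_of_lt hc2) (pow_nonneg hc0 ν)
        apply div_le_div_of_nonneg_right _ h2pos.le
        apply mul_le_mul_of_nonneg_left _ (by positivity)
        linarith
    _ = 2 * ((ν:ℝ)+1) * b^ν := by
        rw [hbdef, div_pow]
        rw [pow_succ]
        field_simp
        ring
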